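/- Let p be an odd prime and D a squarefree integer with p ∤ D. Then the norm-one group modulo p is cyclic: there exists g ∈ ℤ[√D] with N(g) ≡ 1 (mod p) such that for every w ∈ ℤ[√D] with N(w) ≡ 1 (mod p) there exists a natural number k with w ≡ g^k (mod p). -/
import Mathlib

open Zsqrtd

lemma key_lemma (p : ℕ) (D : ℤ) {K : Type} [Field K] [Finite K]
    (φ : Zsqrtd D →+* K)
    (P1 : ∀ z : Zsqrtd D, (p : Zsqrtd D) ∣ z ↔ (φ z = 0 ∧ φ (star z) = 0)) :
    ∃ g : Zsqrtd D, (p : ℤ) ∣ (g.norm - 1) ∧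
      ∀ w : Zsqrtd D, (p : ℤ) ∣ (w.norm - 1) →
        ∃ k : ℕ, (p : Zsqrtd D) ∣ (w - g ^ k) := by
  -- φ p = 0
  have hφp : φ ((p : ℤ) : Zsqrtd D) = 0 := by
    have := (P1 ((p : ℤ) : Zsqrtd D)).mp (by push_cast; exact dvd_refl _)
    simpa using this.1
  -- if norm w ≡ 1, then φ w * φ (star w) = 1
  have hmul : ∀ w : Zsqrtd D, (p : ℤ) ∣ (w.norm - 1) → φ w * φ (star w) = 1 := by
    intro w hw
    obtain ⟨t, ht⟩ := hw
    have : (w.norm : Zsqrtd D) = 1 + (p : ℤ) * t := by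
      have : w.norm = 1 + p * t := by linarith
      exact_mod_cast congrArg (fun n : ℤ => (n : Zsqrtd D)) this
    rw [← map_mul, ← Zsqrtd.norm_eq_mul_conj, this]
    rw [map_add, map_one, map_mul, hφp, zero_mul, add_zero]
  -- the subgroup
  let H : Subgroup Kˣ :=
    { carrier := {u | ∃ w : Zsqrtd D, (p : ℤ) ∣ (w.norm - 1) ∧ φ w = (u : K)}
      one_mem' := ⟨1, by simp, by simp⟩
      mul_mem' := by
        rintro u v ⟨w, hw, hwu⟩ ⟨w', hw', hwv⟩
        refine ⟨w * w', ?_, by simp [hwu, hwv]⟩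
        rw [Zsqrtd.norm_mul]
        obtain ⟨a, ha⟩ := hw; obtain ⟨b, hb⟩ := hw'
        refine ⟨a * w'.norm + b, ?_⟩
        have : w.norm = 1 + p * a := by linarith
        rw [this]; ring_nf; linarith [hb]
      inv_mem' := by
        rintro u ⟨w, hw, hwu⟩
        refine ⟨star w, by rwa [Zsqrtd.norm_conj], ?_⟩
        have h1 : φ w * φ (star w) = 1 := hmul w hw
        rw [hwu] at h1
        rw [Units.val_inv_eq_inv_val]
        exact eq_inv_of_mul_eq_one_right h1 }
  haveI : IsCyclic H := Subgroup.isCyclic H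
  obtain ⟨⟨u₀, hu₀⟩, hgen⟩ := IsCyclic.exists_generator (α := H)
  obtain ⟨g, hg, hgu⟩ := hu₀
  refine ⟨g, hg, ?_⟩
  intro w hw
  set uw : Kˣ := Units.mkOfMulEqOne (φ w) (φ (star w)) (hmul w hw) with huw
  have huwH : uw ∈ H := ⟨w, hw, rfl⟩
  obtain ⟨k, hk⟩ := (mem_powers_iff_mem_zpowers).mpr (hgen ⟨uw, huwH⟩)
  have hk' : (u₀ : Kˣ) ^ k = uw := by
    have := congrArg (Subtype.val) hk
    simpa using this
  have hvals : (u₀ : K) ^ k = φ w := by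
    have := congrArg (Units.val) hk'
    simpa [huw] using this
  have hginv : φ (star g) = ((u₀ : Kˣ) : K)⁻¹ := by
    have h1 := hmul g hg
    rw [hgu] at h1
    exact eq_inv_of_mul_eq_one_right h1
  have hstarvals : φ (star w) = ((u₀ : K) ^ k)⁻¹ := by
    have h1 := hmul w hw
    rw [← hvals] at h1
    exact eq_inv_of_mul_eq_one_right h1
  refine ⟨k, (P1 _).mpr ⟨?_, ?_⟩⟩
  · rw [map_sub, map_pow, hgu, hvals, sub_self]
  · rw [star_sub, map_sub, star_pow, map_pow, hginv, hstarvals, inv_pow, sub_self]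

/-- Theorem 2.1 (cyclicity): the norm-one group of `ℤ[√D]` modulo an odd prime
`p` is cyclic: there is a norm-one `g` such that every norm-one `w` is congruent
to a power of `g` modulo `p`. -/
theorem stmt_6 (p : ℕ) (hp : p.Prime) (hpodd : Odd p)
    (D : ℤ) (hD : Squarefree D) (hpD : ¬ (p : ℤ) ∣ D) :
    ∃ g : Zsqrtd D, (p : ℤ) ∣ (g.norm - 1) ∧
      ∀ w : Zsqrtd D, (p : ℤ) ∣ (w.norm - 1) →
        ∃ k : ℕ, (p : Zsqrtd D) ∣ (w - g ^ k) := by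
  haveI : Fact p.Prime := ⟨hp⟩
  have hD0 : ((D : ZMod p)) ≠ 0 := by
    rw [Ne, ZMod.intCast_zmod_eq_zero_iff_dvd]
    exact hpD
  have h2 : (2 : ZMod p) ≠ 0 := by
    have : ¬ (p : ℤ) ∣ 2 := by
      intro h
      have hpn : p ∣ 2 := by exact_mod_cast h
      have : p = 2 := (Nat.prime_dvd_prime_iff_eq hp Nat.prime_two).mp hpn
      rw [this] at hpodd
      exact Nat.not_odd_iff_even.mpr (by norm_num) hpodd
    rw [show (2 : ZMod p) = ((2 : ℤ) : ZMod p) by norm_num, Ne,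
      ZMod.intCast_zmod_eq_zero_iff_dvd]
    exact this
  -- p ∣ z ↔ casts of re, im vanish
  have hdvd : ∀ z : Zsqrtd D, (p : Zsqrtd D) ∣ z ↔
      ((z.re : ZMod p) = 0 ∧ (z.im : ZMod p) = 0) := by
    intro z
    rw [show ((p : ℕ) : Zsqrtd D) = ((p : ℤ) : Zsqrtd D) by push_cast; rfl,
      Zsqrtd.intCast_dvd]
    constructor
    · rintro ⟨h1, h2⟩
      exact ⟨(ZMod.intCast_zmod_eq_zero_iff_dvd _ _).mpr h1,
        (ZMod.intCast_zmod_eq_zero_iff_dvd _ _).mpr h2⟩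
    · rintro ⟨h1, h2⟩
      exact ⟨(ZMod.intCast_zmod_eq_zero_iff_dvd _ _).mp h1,
        (ZMod.intCast_zmod_eq_zero_iff_dvd _ _).mp h2⟩
  by_cases hs : ∃ s : ZMod p, s * s = (D : ZMod p)
  · -- split case: K = ZMod p
    obtain ⟨s, hss⟩ := hs
    have hs0 : s ≠ 0 := by
      intro h; rw [h, mul_zero] at hss; exact hD0 hss.symm
    set φ : Zsqrtd D →+* ZMod p := Zsqrtd.lift ⟨s, hss⟩ with hφ
    refine key_lemma p D φ ?_
    intro z
    rw [hdvd]
    have hφz : φ z = (z.re : ZMod p) + (z.im : ZMod p) * s := by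
      simp [hφ, Zsqrtd.lift_apply_apply]
    have hφsz : φ (star z) = (z.re : ZMod p) - (z.im : ZMod p) * s := by
      simp [hφ, Zsqrtd.lift_apply_apply, Zsqrtd.re_star, Zsqrtd.im_star]
      ring
    rw [hφz, hφsz]
    constructor
    · rintro ⟨h1, h2⟩; rw [h1, h2]; constructor <;> ring
    · rintro ⟨h1, h2'⟩
      have hre : (2 : ZMod p) * (z.re : ZMod p) = 0 := by linear_combination h1 + h2'
      have hre0 : (z.re : ZMod p) = 0 := by
        rcases mul_eq_zero.mp hre with h | h
        · exact absurd h h2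
        · exact h
      have him : (z.im : ZMod p) * s = 0 := by linear_combination h1 - hre0
      have him0 : (z.im : ZMod p) = 0 := by
        rcases mul_eq_zero.mp him with h | h
        · exact h
        · exact absurd h hs0
      exact ⟨hre0, him0⟩
  · -- inert case
    push_neg at hs
    set d : ZMod p := (D : ZMod p) with hd
    set f : Polynomial (ZMod p) := Polynomial.X ^ 2 - Polynomial.C d with hf
    have hirr : Irreducible f := by
      apply X_pow_sub_C_irreducible_of_prime Nat.prime_two
      intro b hb
      exact hs b (by rw [← hb]; ring)
    haveI : Fact (Irreducible f) := ⟨hirr⟩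
    haveI : Finite (AdjoinRoot f) := by
      haveI := Module.Finite.of_basis (AdjoinRoot.powerBasis hirr.ne_zero).basis
      exact Module.finite_of_finite (ZMod p)
    have hofd : (AdjoinRoot.of f) d = ((D : ℤ) : AdjoinRoot f) :=
      map_intCast (AdjoinRoot.of f) D
    have hroot : AdjoinRoot.root f * AdjoinRoot.root f = ((D : ℤ) : AdjoinRoot f) := by
      have h0 : AdjoinRoot.mk f (Polynomial.X ^ 2 - Polynomial.C d) = 0 := by
        rw [← hf]; exact AdjoinRoot.mk_self
      rw [map_sub, map_pow, AdjoinRoot.mk_X, AdjoinRoot.mk_C, sub_eq_zero] at h0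
      rw [← pow_two, h0, ← hofd]
    set φ : Zsqrtd D →+* AdjoinRoot f := Zsqrtd.lift ⟨AdjoinRoot.root f, hroot⟩ with hφ
    have hdegf : f.degree = 2 := by
      rw [hf]; exact_mod_cast Polynomial.degree_X_pow_sub_C (by norm_num) d
    have hinj : ∀ a b : ZMod p,
        (AdjoinRoot.of f) a + (AdjoinRoot.of f) b * AdjoinRoot.root f = 0 →
          a = 0 ∧ b = 0 := by
      intro a b hab
      have hmk : AdjoinRoot.mk f (Polynomial.C a + Polynomial.C b * Polynomial.X) = 0 := by
        rw [map_add, map_mul, AdjoinRoot.mk_C, AdjoinRoot.mk_C, AdjoinRoot.mk_X]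
        exact hab
      have hdvd' := AdjoinRoot.mk_eq_zero.mp hmk
      have hzero : (Polynomial.C a + Polynomial.C b * Polynomial.X) = 0 := by
        apply Polynomial.eq_zero_of_dvd_of_degree_lt hdvd'
        rw [hdegf]
        have hle : (Polynomial.C a + Polynomial.C b * Polynomial.X).degree
            ≤ (1 : WithBot ℕ) := by compute_degree
        exact lt_of_le_of_lt hle (by norm_num)
      constructor
      · simpa using congrArg (fun q => Polynomial.coeff q 0) hzero
      · simpa using congrArg (fun q => Polynomial.coeff q 1) hzero
    refine key_lemma p D φ ?_
    intro z
    rw [hdvd]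
    have hcast : ∀ m : ℤ, ((m : ℤ) : AdjoinRoot f) = (AdjoinRoot.of f) ((m : ZMod p)) :=
      fun m => (map_intCast (AdjoinRoot.of f) m).symm
    have hφz : φ z = (AdjoinRoot.of f) ((z.re : ZMod p))
        + (AdjoinRoot.of f) ((z.im : ZMod p)) * AdjoinRoot.root f := by
      rw [hφ, Zsqrtd.lift_apply_apply, hcast z.re, hcast z.im]
    have hφsz : φ (star z) = (AdjoinRoot.of f) ((z.re : ZMod p))
        + (AdjoinRoot.of f) (-(z.im : ZMod p)) * AdjoinRoot.root f := by
      rw [hφ, Zsqrtd.lift_apply_apply, Zsqrtd.re_star, Zsqrtd.im_star,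
        hcast z.re, hcast (-z.im)]
      push_cast
      ring_nf
    constructor
    · rintro ⟨h1', h2'⟩
      rw [hφz, hφsz, h1', h2']
      simp
    · rintro ⟨h1', _⟩
      rw [hφz] at h1'
      exact hinj _ _ h1'
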